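/- Let k, c, r be integers such that k ≥ 1, r ≥ 2k + 3, r is odd, c ≡ 1 (mod 3), and 3(k−2)(k−1)/2 ≤ c ≤ 3k(k−1)/2. Then there exists an (r,c)-circulant: that is, there exist n ≥ 1 and a set S of nonzero elements of Z_n such that the circulant Circ(n, S) is r-regular and e(v) = c for every vertex v. -/

import Mathlib

/-- The circulant graph `Circ(n, S)`: vertices are `ZMod n`, and distinct
vertices `x, y` are adjacent iff `x - y ∈ S ∪ (-S)`. -/
def Circulant (n : ℕ) (S : Set (ZMod n)) : SimpleGraph (ZMod n) where
  Adj x y := x ≠ y ∧ x - y ∈ S ∪ -S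
  symm := by
    constructor
    rintro x y ⟨hxy, h⟩
    refine ⟨hxy.symm, ?_⟩
    have hyx : y - x = -(x - y) := by ring
    rw [hyx]
    rcases h with h | h
    · exact Or.inr (Set.neg_mem_neg.mpr h)
    · exact Or.inl (Set.mem_neg.mp h)
  loopless := ⟨fun x h => h.1 rfl⟩

/-- The number of edges of the subgraph of `G` induced by the open
neighbourhood of the vertex `v` (the quantity `e(v)`). -/
noncomputable def nbhdEdgeCount {V : Type*} (G : SimpleGraph V) (v : V) : ℕ :=
  Nat.card (SimpleGraph.induce (G.neighborSet v) G).edgeSet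

open Finset

def dart_equiv_pairs {V : Type*} (G : SimpleGraph V) :
    G.Dart ≃ {p : V × V // G.Adj p.1 p.2} where
  toFun d := ⟨d.toProd, d.adj⟩
  invFun p := ⟨p.1, p.2⟩
  left_inv d := by cases d; rfl
  right_inv p := by cases p; rfl

lemma two_mul_card_edgeSet {V : Type*} [Fintype V] (G : SimpleGraph V) :
    2 * Nat.card G.edgeSet = Nat.card {p : V × V | G.Adj p.1 p.2} := by
  classical
  have h1 : Nat.card G.edgeSet = G.edgeFinset.card := by
    rw [Nat.card_eq_fintype_card, SimpleGraph.edgeFinset_card]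
  have h2 : Nat.card {p : V × V | G.Adj p.1 p.2} = Fintype.card G.Dart := by
    rw [Nat.card_eq_fintype_card]
    exact (Fintype.card_congr (dart_equiv_pairs G)).symm
  rw [h1, h2, SimpleGraph.dart_card_eq_twice_card_edges]

def e2equiv {V : Type*} (A : Set V) (G : SimpleGraph V) :
    {p : ↥A × ↥A // (SimpleGraph.induce A G).Adj p.1 p.2}
      ≃ {q : V × V // q.1 ∈ A ∧ q.2 ∈ A ∧ G.Adj q.1 q.2} where
  toFun p := ⟨(p.1.1.1, p.1.2.1), p.1.1.2, p.1.2.2, by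
    have := p.2
    simpa using this⟩
  invFun q := ⟨(⟨q.1.1, q.2.1⟩, ⟨q.1.2, q.2.2.1⟩), by simpa using q.2.2.2⟩
  left_inv p := by
    obtain ⟨⟨⟨a, ha⟩, ⟨b, hb⟩⟩, h⟩ := p
    rfl
  right_inv q := by
    obtain ⟨⟨a, b⟩, h⟩ := q
    rfl


namespace CircAux

def W (j : ℕ) : ℤ := 4 * (j + 1)
def M (j e : ℕ) : ℤ := 32 * (j + 1) * 4 ^ e
def w (j s : ℕ) : ℤ := 2 * j + 1 - s
noncomputable def Lz (j s : ℕ) : Finset ℤ := Icc (1:ℤ) j ∪ {w j s}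
def Pz (j e : ℕ) : Finset ℤ := (Icc 1 e).image fun i => W j * 4 ^ i
noncomputable def FS (j s e : ℕ) : Finset ℤ := Lz j s ∪ Pz j e

lemma w_lb (j s : ℕ) (hs : s ≤ j) : (j:ℤ) + 1 ≤ w j s := by unfold w; omega
lemma w_ub (j s : ℕ) : w j s ≤ 2 * j + 1 := by unfold w; omega

lemma mem_Lz_iff {j s : ℕ} {x : ℤ} : x ∈ Lz j s ↔ (1 ≤ x ∧ x ≤ j) ∨ x = w j s := by
  rw [Lz, mem_union, mem_Icc, mem_singleton]

lemma pow4_le {a b : ℕ} (h : a < b) : (4:ℤ)^a * 4 ≤ 4^b := by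
  calc (4:ℤ)^a * 4 = 4^(a+1) := by ring
  _ ≤ 4^b := pow_le_pow_right₀ (by norm_num) h

lemma pow4_pos (a : ℕ) : (0:ℤ) < 4^a := by positivity

lemma mem_Pz_iff {j e : ℕ} {x : ℤ} :
    x ∈ Pz j e ↔ ∃ i, 1 ≤ i ∧ i ≤ e ∧ x = W j * 4 ^ i := by
  simp only [Pz, mem_image, mem_Icc]
  constructor
  · rintro ⟨i, ⟨h1, h2⟩, h3⟩; exact ⟨i, h1, h2, h3.symm⟩
  · rintro ⟨i, h1, h2, h3⟩; exact ⟨i, ⟨h1, h2⟩, h3.symm⟩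

lemma W_pos (j : ℕ) : 0 < W j := by unfold W; positivity

lemma mem_Pz_lb {j e : ℕ} {x : ℤ} (hx : x ∈ Pz j e) : 4 * W j ≤ x := by
  obtain ⟨i, h1, _, rfl⟩ := mem_Pz_iff.mp hx
  have h4 : (4:ℤ)^0 * 4 ≤ 4 ^ i := pow4_le h1
  nlinarith [W_pos j]

lemma mem_FS_bounds {j s e : ℕ} {x : ℤ} (hs : s ≤ j) (hx : x ∈ FS j s e) :
    1 ≤ x ∧ 8 * x ≤ M j e := by
  have hMW : M j e = 8 * W j * 4 ^ e := by unfold M W; ring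
  rcases mem_union.mp hx with h | h
  · rcases mem_Lz_iff.mp h with ⟨h1, h2⟩ | rfl
    · refine ⟨h1, ?_⟩
      have := pow4_pos e
      have : (1:ℤ) ≤ 4 ^ e := this
      unfold M; push_cast; nlinarith
    · have h1 := w_lb j s hs
      have h2 := w_ub j s
      refine ⟨by omega, ?_⟩
      have : (1:ℤ) ≤ 4 ^ e := pow4_pos e
      unfold M; push_cast at h2 ⊢; nlinarith
  · obtain ⟨i, h1, h2, rfl⟩ := mem_Pz_iff.mp h
    have hW := W_pos j
    have h4i : (0:ℤ) < 4 ^ i := pow4_pos i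
    refine ⟨by nlinarith, ?_⟩
    have : (4:ℤ)^i ≤ 4^e := pow_le_pow_right₀ (by norm_num) h2
    rw [hMW]; nlinarith

lemma M_pos (j e : ℕ) : 0 < M j e := by
  unfold M; positivity

/-- pads don't participate in additive triples inside FS -/
lemma sum_in_Lz {j s e : ℕ} (hs : s ≤ j) {x y : ℤ} (hx : x ∈ FS j s e)
    (hy : y ∈ FS j s e) (hxy : x + y ∈ FS j s e) :
    x ∈ Lz j s ∧ y ∈ Lz j s ∧ x + y ∈ Lz j s := by
  have hwub := w_ub j s
  have hwlb := w_lb j s hs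
  have hW : 2 * (2 * (j:ℤ) + 1) < 4 * W j := by unfold W; push_cast; omega
  have hLub : ∀ z ∈ Lz j s, z ≤ 2 * (j:ℤ) + 1 := by
    intro z hz; rcases mem_Lz_iff.mp hz with ⟨_, h⟩ | rfl <;> omega
  have hLlb : ∀ z ∈ Lz j s, 1 ≤ z := by
    intro z hz; rcases mem_Lz_iff.mp hz with ⟨h, _⟩ | rfl <;> omega
  -- main trick : if any of x, y, x+y is a pad, contradiction
  have key : ∀ a b : ℤ, a ∈ Pz j e → b ∈ FS j s e → ¬ (a + b ∈ FS j s e) := by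
    intro a b ha hb hab
    obtain ⟨i, hi1, hi2, rfl⟩ := mem_Pz_iff.mp ha
    have hb1 := (mem_FS_bounds hs hb).1
    have hW4 : (0:ℤ) < 4 ^ i := pow4_pos i
    have hWp := W_pos j
    -- a + b > a ≥ 4W > 2j+1, so a + b ∉ Lz; hence it's a pad
    have hab' : W j * 4 ^ i + b ∈ Pz j e := by
      rcases mem_union.mp hab with h | h
      · exfalso
        have := hLub _ h
        have h4 : (4:ℤ)^0 * 4 ≤ 4 ^ i := pow4_le hi1
        nlinarith
      · exact h
    obtain ⟨i', hi'1, hi'2, heq⟩ := mem_Pz_iff.mp hab'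
    -- b = W (4^i' - 4^i), i' > i, so b ≥ 3 W 4^(i'-1) ≥ 3 W 4^i ≥ 12 W
    have hii' : i < i' := by
      by_contra hcon
      push_neg at hcon
      have : (4:ℤ)^i' ≤ 4^i := pow_le_pow_right₀ (by norm_num) hcon
      nlinarith
    have hb' : b = W j * 4 ^ i' - W j * 4 ^ i := by omega
    -- b ∈ FS : case Lz impossible since b ≥ 3*4^(i'-1)*W ≥ 3W > 2j+1
    have hblarge : 3 * (W j * 4 ^ (i'-1)) ≤ b := by
      have h1 : (4:ℤ)^i * 4 ≤ 4 ^ i' := pow4_le hii'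
      have h2 : (4:ℤ)^i ≤ 4 ^ (i'-1) := pow_le_pow_right₀ (by norm_num) (by omega)
      have h3 : (4:ℤ)^(i'-1) * 4 = 4 ^ i' := by
        rw [← pow_succ]; congr 1; omega
      nlinarith
    rcases mem_union.mp hb with h | h
    · have := hLub _ h
      have h2 : (1:ℤ) ≤ 4 ^ (i'-1) := pow4_pos _
      nlinarith
    · obtain ⟨c, hc1, hc2, hceq⟩ := mem_Pz_iff.mp h
      -- W 4^c = b ≥ 3 W 4^(i'-1) > W 4^(i'-1) ⇒ c ≥ i', but b < W 4^i'
      have hci' : i' ≤ c := by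
        by_contra hcon
        push_neg at hcon
        have : (4:ℤ)^c ≤ 4^(i'-1) := pow_le_pow_right₀ (by norm_num) (by omega)
        nlinarith
      have : (4:ℤ)^i' ≤ 4^c := pow_le_pow_right₀ (by norm_num) hci'
      nlinarith
  rcases mem_union.mp hx with hxL | hxP
  · rcases mem_union.mp hy with hyL | hyP
    · refine ⟨hxL, hyL, ?_⟩
      rcases mem_union.mp hxy with h | h
      · exact h
      · exfalso
        have := mem_Pz_lb h
        have h1 := hLub _ hxL
        have h2 := hLub _ hyL
        omega
    · exfalso; exact key y x hyP (mem_union_left _ hxL) (by rwa [add_comm])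
  · exfalso; exact key x y hxP hy hxy


/-- Number of pairs (x,y) with 1 ≤ x,y and x+y ≤ j is j(j-1)/2. -/
lemma S1_card (j : ℕ) :
    2 * ((Icc (1:ℤ) j ×ˢ Icc (1:ℤ) j).filter
      (fun p => p.1 + p.2 ∈ Icc (1:ℤ) (j:ℤ))).card = j * (j - 1) := by
  induction j with
  | zero => simp
  | succ j ih =>
    have hset : (Icc (1:ℤ) (j+1) ×ˢ Icc (1:ℤ) (j+1)).filter
        (fun p => p.1 + p.2 ∈ Icc (1:ℤ) ((j:ℤ)+1))
        = (Icc (1:ℤ) j ×ˢ Icc (1:ℤ) j).filter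
            (fun p => p.1 + p.2 ∈ Icc (1:ℤ) (j:ℤ))
          ∪ (Icc (1:ℤ) j).image (fun x => (x, (j:ℤ)+1-x)) := by
      ext ⟨x, y⟩
      simp only [mem_filter, mem_product, mem_Icc, mem_union, mem_image, Prod.mk.injEq,
        Prod.ext_iff]
      constructor
      · rintro ⟨⟨⟨hx1, hx2⟩, ⟨hy1, hy2⟩⟩, hs1, hs2⟩
        by_cases h : x + y ≤ (j:ℤ)
        · left; omega
        · right; exact ⟨x, by omega, by omega⟩
      · rintro (⟨⟨⟨hx1, hx2⟩, ⟨hy1, hy2⟩⟩, hs1, hs2⟩ | ⟨a, ⟨ha1, ha2⟩, hax, hay⟩) <;> omega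
    have hdisj : Disjoint ((Icc (1:ℤ) j ×ˢ Icc (1:ℤ) j).filter
        (fun p => p.1 + p.2 ∈ Icc (1:ℤ) (j:ℤ)))
        ((Icc (1:ℤ) j).image (fun x => (x, (j:ℤ)+1-x))) := by
      rw [Finset.disjoint_left]
      rintro ⟨x, y⟩ hp hq
      simp only [mem_filter, mem_product, mem_Icc, mem_image, Prod.mk.injEq] at hp hq
      obtain ⟨a, ha, hax, hay⟩ := hq
      omega
    have hinj : ((Icc (1:ℤ) j).image (fun x => (x, (j:ℤ)+1-x))).card = j := by
      rw [Finset.card_image_of_injective _ (fun a b h => (Prod.ext_iff.mp h).1)]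
      simp [Int.card_Icc]
    push_cast
    rw [hset, Finset.card_union_of_disjoint hdisj, hinj]
    obtain hj0 | hj1 := Nat.eq_zero_or_pos j
    · subst hj0; simp_all
    · zify [hj1] at ih ⊢
      ring_nf at ih ⊢
      linarith [ih]



lemma S2_card (j s : ℕ) (hs : s ≤ j) :
    ((Icc (1:ℤ) j ×ˢ Icc (1:ℤ) j).filter (fun p => p.1 + p.2 = w j s)).card = s := by
  have hw : w j s = 2 * (j:ℤ) + 1 - s := rfl
  have : ((Icc (1:ℤ) j ×ˢ Icc (1:ℤ) j).filter (fun p => p.1 + p.2 = w j s)).card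
      = (Icc (w j s - j) (j:ℤ)).card := by
    apply Finset.card_bij (fun (p : ℤ × ℤ) _ => p.1)
    · rintro ⟨x, y⟩ hp
      simp only [mem_filter, mem_product, mem_Icc] at hp
      simp only [mem_Icc]
      omega
    · rintro ⟨x, y⟩ hp ⟨x', y'⟩ hp' h
      simp only [mem_filter, mem_product, mem_Icc] at hp hp'
      simp only at h
      ext <;> omega
    · intro a ha
      simp only [mem_Icc] at ha
      refine ⟨(a, w j s - a), ?_, rfl⟩
      simp only [mem_filter, mem_product, mem_Icc]
      omega
  rw [this, Int.card_Icc]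
  omega

lemma ALz_split (j s : ℕ) (hs : s ≤ j) :
    (Lz j s ×ˢ Lz j s).filter (fun p => p.1 + p.2 ∈ Lz j s)
      = (Icc (1:ℤ) j ×ˢ Icc (1:ℤ) j).filter (fun p => p.1 + p.2 ∈ Icc (1:ℤ) (j:ℤ))
        ∪ (Icc (1:ℤ) j ×ˢ Icc (1:ℤ) j).filter (fun p => p.1 + p.2 = w j s) := by
  have hw : w j s = 2 * (j:ℤ) + 1 - s := rfl
  ext ⟨x, y⟩
  simp only [mem_filter, mem_product, mem_union, mem_Icc, mem_Lz_iff]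
  constructor
  · rintro ⟨⟨hx, hy⟩, hsum⟩
    rcases hx with hx | rfl <;> rcases hy with hy | h2 <;> omega
  · rintro (⟨⟨hx, hy⟩, hsum⟩ | ⟨⟨hx, hy⟩, hsum⟩) <;>
      exact ⟨⟨by omega, by omega⟩, by omega⟩

lemma ALz_card (j s : ℕ) (hs : s ≤ j) :
    2 * ((Lz j s ×ˢ Lz j s).filter (fun p => p.1 + p.2 ∈ Lz j s)).card
      = j * (j - 1) + 2 * s := by
  rw [ALz_split j s hs, Finset.card_union_of_disjoint, Nat.mul_add, S1_card, S2_card j s hs]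
  · rw [Finset.disjoint_left]
    rintro ⟨x, y⟩ hp hq
    simp only [mem_filter, mem_product, mem_Icc] at hp hq
    have := w_lb j s hs
    omega


lemma AFS_card (j s e : ℕ) (hs : s ≤ j) :
    2 * ((FS j s e ×ˢ FS j s e).filter (fun p => p.1 + p.2 ∈ FS j s e)).card
      = j * (j - 1) + 2 * s := by
  have hset : (FS j s e ×ˢ FS j s e).filter (fun p => p.1 + p.2 ∈ FS j s e)
      = (Lz j s ×ˢ Lz j s).filter (fun p => p.1 + p.2 ∈ Lz j s) := by
    ext ⟨x, y⟩
    simp only [mem_filter, mem_product]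
    constructor
    · rintro ⟨⟨hx, hy⟩, hsum⟩
      obtain ⟨h1, h2, h3⟩ := sum_in_Lz hs hx hy hsum
      exact ⟨⟨h1, h2⟩, h3⟩
    · rintro ⟨⟨hx, hy⟩, hsum⟩
      exact ⟨⟨mem_union_left _ hx, mem_union_left _ hy⟩, mem_union_left _ hsum⟩
  rw [hset]
  exact ALz_card j s hs

noncomputable def NFS (j s e : ℕ) : Finset ℤ := (FS j s e).image (fun x => -x)
noncomputable def RS (j s e : ℕ) : Finset ℤ := FS j s e ∪ NFS j s e

lemma mem_NFS_iff {j s e : ℕ} {x : ℤ} : x ∈ NFS j s e ↔ -x ∈ FS j s e := by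
  simp only [NFS, mem_image]
  constructor
  · rintro ⟨a, ha, rfl⟩; simpa
  · intro h; exact ⟨-x, h, by ring⟩

lemma mem_RS_iff {j s e : ℕ} {x : ℤ} :
    x ∈ RS j s e ↔ x ∈ FS j s e ∨ -x ∈ FS j s e := by
  simp [RS, mem_union, mem_NFS_iff]

lemma FS_pos {j s e : ℕ} (hs : s ≤ j) {x : ℤ} (hx : x ∈ FS j s e) : 0 < x :=
  (mem_FS_bounds hs hx).1

lemma mem_RS_pos {j s e : ℕ} (hs : s ≤ j) {x : ℤ} (hx : x ∈ RS j s e) (h0 : 0 < x) :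
    x ∈ FS j s e := by
  rcases mem_RS_iff.mp hx with h | h
  · exact h
  · exact absurd (FS_pos hs h) (by omega)

lemma mem_RS_neg {j s e : ℕ} {x : ℤ} (hx : x ∈ RS j s e) : -x ∈ RS j s e := by
  rcases mem_RS_iff.mp hx with h | h
  · exact mem_RS_iff.mpr (Or.inr (by simpa))
  · exact mem_RS_iff.mpr (Or.inl h)

/-- reference triple-count finset -/
noncomputable def Af (j s e : ℕ) : Finset (ℤ × ℤ) :=
  (FS j s e ×ˢ FS j s e).filter (fun p => p.1 + p.2 ∈ FS j s e)

lemma mem_Af_iff {j s e : ℕ} {p : ℤ × ℤ} :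
    p ∈ Af j s e ↔ (p.1 ∈ FS j s e ∧ p.2 ∈ FS j s e) ∧ p.1 + p.2 ∈ FS j s e := by
  simp [Af, mem_filter, mem_product]

lemma cp_blk1a (j s e : ℕ) :
    ((FS j s e ×ˢ FS j s e).filter (fun p => p.1 - p.2 ∈ FS j s e)).card
      = (Af j s e).card := by
  apply Finset.card_bij (fun (p : ℤ × ℤ) _ => (p.2, p.1 - p.2))
  · rintro ⟨x, y⟩ hp
    simp only [mem_filter, mem_product] at hp
    rw [mem_Af_iff]
    exact ⟨⟨hp.1.2, hp.2⟩, by simpa using hp.1.1⟩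
  · rintro ⟨x, y⟩ h1 ⟨x', y'⟩ h2 h
    simp only [Prod.mk.injEq] at h
    have : x = x' := by omega
    simp_all
  · rintro ⟨a, b⟩ hab
    rw [mem_Af_iff] at hab
    refine ⟨(a + b, a), ?_, by simp⟩
    simp only [mem_filter, mem_product]
    exact ⟨⟨hab.2, hab.1.1⟩, by simpa using hab.1.2⟩

lemma cp_blk1b (j s e : ℕ) :
    ((FS j s e ×ˢ FS j s e).filter (fun p => p.2 - p.1 ∈ FS j s e)).card
      = (Af j s e).card := by
  apply Finset.card_bij (fun (p : ℤ × ℤ) _ => (p.1, p.2 - p.1))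
  · rintro ⟨x, y⟩ hp
    simp only [mem_filter, mem_product] at hp
    rw [mem_Af_iff]
    exact ⟨⟨hp.1.1, hp.2⟩, by simpa using hp.1.2⟩
  · rintro ⟨x, y⟩ h1 ⟨x', y'⟩ h2 h
    simp only [Prod.mk.injEq] at h
    have hx : x = x' := h.1
    have hy : y = y' := by omega
    simp_all
  · rintro ⟨a, b⟩ hab
    rw [mem_Af_iff] at hab
    refine ⟨(a, a + b), ?_, by simp⟩
    simp only [mem_filter, mem_product]
    exact ⟨⟨hab.1.1, hab.2⟩, by simpa using hab.1.2⟩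

lemma cp_blk1 (j s e : ℕ) (hs : s ≤ j) :
    ((FS j s e ×ˢ FS j s e).filter (fun p => p.1 - p.2 ∈ RS j s e)).card
      = 2 * (Af j s e).card := by
  have hsplit : (FS j s e ×ˢ FS j s e).filter (fun p => p.1 - p.2 ∈ RS j s e)
      = (FS j s e ×ˢ FS j s e).filter (fun p => p.1 - p.2 ∈ FS j s e)
        ∪ (FS j s e ×ˢ FS j s e).filter (fun p => p.2 - p.1 ∈ FS j s e) := by
    ext ⟨x, y⟩
    simp only [mem_filter, mem_product, mem_union]
    constructor
    · rintro ⟨hxy, hd⟩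
      rcases mem_RS_iff.mp hd with h | h
      · exact Or.inl ⟨hxy, h⟩
      · exact Or.inr ⟨hxy, by simpa using h⟩
    · rintro (⟨hxy, hd⟩ | ⟨hxy, hd⟩)
      · exact ⟨hxy, mem_RS_iff.mpr (Or.inl hd)⟩
      · exact ⟨hxy, mem_RS_iff.mpr (Or.inr (by simpa using hd))⟩
  rw [hsplit, Finset.card_union_of_disjoint, cp_blk1a, cp_blk1b]
  · omega
  · rw [Finset.disjoint_left]
    rintro ⟨x, y⟩ h1 h2
    simp only [mem_filter, mem_product] at h1 h2
    have := FS_pos hs h1.2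
    have := FS_pos hs h2.2
    omega

lemma cp_blk2 (j s e : ℕ) (hs : s ≤ j) :
    ((FS j s e ×ˢ NFS j s e).filter (fun p => p.1 - p.2 ∈ RS j s e)).card
      = (Af j s e).card := by
  apply Finset.card_bij (fun (p : ℤ × ℤ) _ => (p.1, -p.2))
  · rintro ⟨x, y⟩ hp
    simp only [mem_filter, mem_product] at hp
    obtain ⟨⟨hx, hy⟩, hd⟩ := hp
    have hy' : -y ∈ FS j s e := mem_NFS_iff.mp hy
    rw [mem_Af_iff]
    refine ⟨⟨hx, hy'⟩, ?_⟩
    have h0 : 0 < x - y := by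
      have := FS_pos hs hx; have := FS_pos hs hy'; omega
    have h2 := mem_RS_pos hs hd h0
    have h3 : x + -y = x - y := by ring
    rw [h3]; exact h2
  · rintro ⟨x, y⟩ h1 ⟨x', y'⟩ h2 h
    simp only [Prod.mk.injEq] at h
    have hx : x = x' := h.1
    have hy : y = y' := by omega
    simp_all
  · rintro ⟨a, b⟩ hab
    rw [mem_Af_iff] at hab
    refine ⟨(a, -b), ?_, by simp⟩
    simp only [mem_filter, mem_product]
    refine ⟨⟨hab.1.1, mem_NFS_iff.mpr (by simpa using hab.1.2)⟩, ?_⟩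
    have h1 : a - -b = a + b := by ring
    rw [h1]
    exact mem_RS_iff.mpr (Or.inl hab.2)

lemma cp_blk3 (j s e : ℕ) (hs : s ≤ j) :
    ((NFS j s e ×ˢ FS j s e).filter (fun p => p.1 - p.2 ∈ RS j s e)).card
      = (Af j s e).card := by
  apply Finset.card_bij (fun (p : ℤ × ℤ) _ => (p.2, -p.1))
  · rintro ⟨x, y⟩ hp
    simp only [mem_filter, mem_product] at hp
    obtain ⟨⟨hx, hy⟩, hd⟩ := hp
    have hx' : -x ∈ FS j s e := mem_NFS_iff.mp hx
    rw [mem_Af_iff]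
    refine ⟨⟨hy, hx'⟩, ?_⟩
    have h0 : 0 < -(x - y) := by
      have := FS_pos hs hy; have := FS_pos hs hx'; omega
    have h2 := mem_RS_pos hs (mem_RS_neg hd) h0
    have h3 : y + -x = -(x - y) := by ring
    rw [h3]; exact h2
  · rintro ⟨x, y⟩ h1 ⟨x', y'⟩ h2 h
    simp only [Prod.mk.injEq] at h
    have hy : y = y' := h.1
    have hx : x = x' := by omega
    simp_all
  · rintro ⟨a, b⟩ hab
    rw [mem_Af_iff] at hab
    refine ⟨(-b, a), ?_, by simp⟩
    simp only [mem_filter, mem_product]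
    refine ⟨⟨mem_NFS_iff.mpr (by simpa using hab.1.2), hab.1.1⟩, ?_⟩
    have h1 : -b - a = -(a + b) := by ring
    rw [h1]
    exact mem_RS_neg (mem_RS_iff.mpr (Or.inl hab.2))

lemma cp_blk4 (j s e : ℕ) (hs : s ≤ j) :
    ((NFS j s e ×ˢ NFS j s e).filter (fun p => p.1 - p.2 ∈ RS j s e)).card
      = 2 * (Af j s e).card := by
  rw [← cp_blk1 j s e hs]
  apply Finset.card_bij (fun (p : ℤ × ℤ) _ => (-p.1, -p.2))
  · rintro ⟨x, y⟩ hp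
    simp only [mem_filter, mem_product] at hp ⊢
    obtain ⟨⟨hx, hy⟩, hd⟩ := hp
    refine ⟨⟨mem_NFS_iff.mp hx, mem_NFS_iff.mp hy⟩, ?_⟩
    have h1 : -x - -y = -(x - y) := by ring
    rw [h1]
    exact mem_RS_neg hd
  · rintro ⟨x, y⟩ h1 ⟨x', y'⟩ h2 h
    simp only [Prod.mk.injEq] at h
    have hx : x = x' := by omega
    have hy : y = y' := by omega
    simp_all
  · rintro ⟨a, b⟩ hab
    simp only [mem_filter, mem_product] at hab
    refine ⟨(-a, -b), ?_, by simp⟩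
    simp only [mem_filter, mem_product]
    refine ⟨⟨mem_NFS_iff.mpr (by simpa using hab.1.1),
      mem_NFS_iff.mpr (by simpa using hab.1.2)⟩, ?_⟩
    have h1 : -a - -b = -(a - b) := by ring
    rw [h1]
    exact mem_RS_neg hab.2

lemma CP_card (j s e : ℕ) (hs : s ≤ j) :
    ((RS j s e ×ˢ RS j s e).filter (fun p => p.1 - p.2 ∈ RS j s e)).card
      = 6 * (Af j s e).card := by
  have hdisjFN : ∀ x : ℤ, x ∈ FS j s e → x ∈ NFS j s e → False := by
    intro x h1 h2
    have := FS_pos hs h1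
    have := FS_pos hs (mem_NFS_iff.mp h2)
    omega
  have hprod : RS j s e ×ˢ RS j s e
      = (FS j s e ×ˢ FS j s e ∪ FS j s e ×ˢ NFS j s e)
        ∪ (NFS j s e ×ˢ FS j s e ∪ NFS j s e ×ˢ NFS j s e) := by
    ext ⟨x, y⟩
    simp only [mem_product, mem_union, RS]
    tauto
  rw [hprod, Finset.filter_union, Finset.filter_union, Finset.filter_union,
    Finset.card_union_of_disjoint, Finset.card_union_of_disjoint,
    Finset.card_union_of_disjoint, cp_blk1 j s e hs, cp_blk2 j s e hs,
    cp_blk3 j s e hs, cp_blk4 j s e hs]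
  · ring
  all_goals
    rw [Finset.disjoint_left]
    rintro ⟨x, y⟩ h1 h2
    simp only [mem_filter, mem_product, mem_union] at h1 h2
    first
      | exact hdisjFN _ h1.1.2 h2.1.2
      | exact hdisjFN _ h1.1.1 h2.1.1
      | exact hdisjFN _ h2.1.1 h1.1.1
      | (rcases h1 with ⟨⟨ha, _⟩, _⟩ | ⟨⟨ha, _⟩, _⟩ <;>
         rcases h2 with ⟨⟨hb, _⟩, _⟩ | ⟨⟨hb, _⟩, _⟩ <;>
         exact hdisjFN _ ha hb)

noncomputable def Rf (j s e : ℕ) : Finset ℤ := RS j s e ∪ {2 * M j e, -(2 * M j e), 3 * M j e}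
noncomputable def Fp (j s e : ℕ) : Finset ℤ := FS j s e ∪ {2 * M j e, 3 * M j e}
noncomputable def Rx (j s e : ℕ) : Finset ℤ := Fp j s e ∪ (Fp j s e).image (fun x => -x)

lemma mem_Rf_cases {j s e : ℕ} {v : ℤ} (h : v ∈ Rf j s e) :
    v ∈ RS j s e ∨ v = 2 * M j e ∨ v = -(2 * M j e) ∨ v = 3 * M j e := by
  simp only [Rf, mem_union, mem_insert, mem_singleton] at h
  tauto


lemma RS_subset_Rf {j s e : ℕ} {v : ℤ} (h : v ∈ RS j s e) : v ∈ Rf j s e := by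
  simp [Rf, mem_union, h]

lemma mem_Rx_iff {j s e : ℕ} {v : ℤ} :
    v ∈ Rx j s e ↔ v ∈ FS j s e ∨ -v ∈ FS j s e ∨ v = 2 * M j e ∨ v = 3 * M j e
      ∨ v = -(2 * M j e) ∨ v = -(3 * M j e) := by
  simp only [Rx, Fp, mem_union, mem_image, mem_insert, mem_singleton]
  constructor
  · rintro ((h | h | h) | ⟨a, ha, rfl⟩)
    · tauto
    · tauto
    · tauto
    · rcases ha with ha | ha | ha
      · right; left; simpa using ha
      · subst ha; tauto
      · subst ha; tauto
  · rintro (h | h | h | h | h | h)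
    · tauto
    · exact Or.inr ⟨-v, Or.inl h, by ring⟩
    · tauto
    · tauto
    · exact Or.inr ⟨2 * M j e, by tauto, by omega⟩
    · exact Or.inr ⟨3 * M j e, by tauto, by omega⟩

lemma mem_RS_bounds {j s e : ℕ} (hs : s ≤ j) {v : ℤ} (h : v ∈ RS j s e) :
    v ≠ 0 ∧ -(M j e) ≤ 8 * v ∧ 8 * v ≤ M j e := by
  rcases mem_RS_iff.mp h with h | h <;> obtain ⟨h1, h2⟩ := mem_FS_bounds hs h <;>
    refine ⟨by omega, by omega, by omega⟩

lemma mem_Rf_cases' {j s e : ℕ} (hs : s ≤ j) {v : ℤ} (h : v ∈ Rf j s e) :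
    (v ∈ RS j s e ∧ v ≠ 0 ∧ -(M j e) ≤ 8 * v ∧ 8 * v ≤ M j e)
      ∨ v = 2 * M j e ∨ v = -(2 * M j e) ∨ v = 3 * M j e := by
  rcases mem_Rf_cases h with h | h | h | h
  · obtain ⟨h1, h2, h3⟩ := mem_RS_bounds hs h
    exact Or.inl ⟨h, h1, h2, h3⟩
  all_goals tauto

lemma mem_Rx_cases {j s e : ℕ} (hs : s ≤ j) {v : ℤ} (h : v ∈ Rx j s e) :
    (v ≠ 0 ∧ -(M j e) ≤ 8 * v ∧ 8 * v ≤ M j e) ∨ v = 2 * M j e ∨ v = 3 * M j e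
      ∨ v = -(2 * M j e) ∨ v = -(3 * M j e) := by
  rcases mem_Rx_iff.mp h with h | h | h | h | h | h
  · obtain ⟨h1, h2⟩ := mem_FS_bounds hs h; left; refine ⟨by omega, by omega, by omega⟩
  · obtain ⟨h1, h2⟩ := mem_FS_bounds hs h; left; refine ⟨by omega, by omega, by omega⟩
  all_goals tauto

lemma mem_Rx_bound {j s e : ℕ} (hs : s ≤ j) {v : ℤ} (h : v ∈ Rx j s e) :
    -(24 * M j e) ≤ 8 * v ∧ 8 * v ≤ 24 * M j e := by
  have hM := M_pos j e
  rcases mem_Rx_cases hs h with ⟨_, h1, h2⟩ | h | h | h | h <;> omega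

lemma mem_Rx_small {j s e : ℕ} (hs : s ≤ j) {v : ℤ}
    (h : v ∈ Rx j s e) (h1 : -(2 * M j e) ≤ 8 * v) (h2 : 8 * v ≤ 2 * M j e) :
    v ∈ RS j s e := by
  have hM := M_pos j e
  rcases mem_Rx_iff.mp h with h | h | h | h | h | h
  · exact mem_RS_iff.mpr (Or.inl h)
  · exact mem_RS_iff.mpr (Or.inr h)
  all_goals (exfalso; omega)

lemma RS_subset_Rx {j s e : ℕ} {v : ℤ} (h : v ∈ RS j s e) : v ∈ Rx j s e := by
  rcases mem_RS_iff.mp h with h | h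
  · exact mem_Rx_iff.mpr (Or.inl h)
  · exact mem_Rx_iff.mpr (Or.inr (Or.inl h))

noncomputable def ZP (j s e : ℕ) : Finset (ℤ × ℤ) :=
  (Rf j s e ×ˢ Rf j s e).filter (fun p => p.1 ≠ p.2 ∧
    (p.1 - p.2 ∈ Rx j s e ∨ p.1 - p.2 - 6 * M j e ∈ Rx j s e
      ∨ p.1 - p.2 + 6 * M j e ∈ Rx j s e))

lemma rsrs_diff {j s e : ℕ} (hs : s ≤ j) {x y : ℤ} (hx : x ∈ RS j s e)
    (hy : y ∈ RS j s e)
    (hd : x - y ∈ Rx j s e ∨ x - y - 6 * M j e ∈ Rx j s e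
      ∨ x - y + 6 * M j e ∈ Rx j s e) :
    x - y ∈ RS j s e := by
  obtain ⟨hx0, hx1, hx2⟩ := mem_RS_bounds hs hx
  obtain ⟨hy0, hy1, hy2⟩ := mem_RS_bounds hs hy
  have hM := M_pos j e
  rcases hd with h | h | h
  · exact mem_Rx_small hs h (by omega) (by omega)
  · exfalso; have := mem_Rx_bound hs h; omega
  · exfalso; have := mem_Rx_bound hs h; omega

lemma ZP_eq (j s e : ℕ) (hs : s ≤ j) :
    ZP j s e = (RS j s e ×ˢ RS j s e).filter (fun p => p.1 - p.2 ∈ RS j s e)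
      ∪ {(2 * M j e, -(2 * M j e)), (-(2 * M j e), 2 * M j e)} := by
  have hM := M_pos j e
  ext ⟨x, y⟩
  simp only [ZP, mem_filter, mem_product, mem_union, mem_insert, mem_singleton,
    Prod.mk.injEq]
  constructor
  · rintro ⟨⟨hx, hy⟩, hne, hd⟩
    rcases mem_Rf_cases' hs hx with ⟨hx', hbx0, hbx1, hbx2⟩ | rfl | rfl | rfl <;>
      rcases mem_Rf_cases' hs hy with ⟨hy', hby0, hby1, hby2⟩ | rfl | rfl | rfl <;>
      first
        | exact Or.inl ⟨⟨by assumption, by assumption⟩,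
            rsrs_diff hs (by assumption) (by assumption) hd⟩
        | (right; left; exact ⟨rfl, rfl⟩)
        | (right; right; exact ⟨rfl, rfl⟩)
        | (exfalso;
           rcases hd with h | h | h <;>
             rcases mem_Rx_cases hs h with ⟨h0, h1, h2⟩ | h' | h' | h' | h' <;> omega)
  · rintro (⟨⟨hx, hy⟩, hd⟩ | ⟨rfl, rfl⟩ | ⟨rfl, rfl⟩)
    · have h0 := (mem_RS_bounds hs hd).1
      exact ⟨⟨RS_subset_Rf hx, RS_subset_Rf hy⟩, by omega,
        Or.inl (RS_subset_Rx hd)⟩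
    · refine ⟨⟨?_, ?_⟩, by omega, ?_⟩
      · simp [Rf, mem_union, mem_insert]
      · simp [Rf, mem_union, mem_insert, mem_singleton]
      · right; left
        have h1 : 2 * M j e - -(2 * M j e) - 6 * M j e = -(2 * M j e) := by ring
        rw [h1]
        exact mem_Rx_iff.mpr (by tauto)
    · refine ⟨⟨?_, ?_⟩, by omega, ?_⟩
      · simp [Rf, mem_union, mem_insert, mem_singleton]
      · simp [Rf, mem_union, mem_insert]
      · right; right
        have h1 : -(2 * M j e) - 2 * M j e + 6 * M j e = 2 * M j e := by ring
        rw [h1]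
        exact mem_Rx_iff.mpr (by tauto)

lemma ZP_card (j s e : ℕ) (hj : 1 ≤ j) (hs : s ≤ j) :
    (ZP j s e).card = 6 * (Af j s e).card + 2 := by
  have hM := M_pos j e
  rw [ZP_eq j s e hs, Finset.card_union_of_disjoint, CP_card j s e hs]
  · congr 1
    rw [Finset.card_insert_of_notMem, Finset.card_singleton]
    simp only [mem_singleton, Prod.mk.injEq, not_and]
    intro h; omega
  · rw [Finset.disjoint_left]
    rintro ⟨x, y⟩ h1 h2
    simp only [mem_filter, mem_product, mem_insert, mem_singleton, Prod.mk.injEq] at h1 h2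
    obtain ⟨⟨hx, hy⟩, _⟩ := h1
    obtain ⟨h3, h4, h5⟩ := mem_RS_bounds hs hx
    rcases h2 with ⟨rfl, _⟩ | ⟨rfl, _⟩ <;> omega

def nN (j e : ℕ) : ℕ := 192 * (j + 1) * 4 ^ e

lemma nN_eq (j e : ℕ) : (nN j e : ℤ) = 6 * M j e := by
  unfold nN M; push_cast; ring

lemma nN_pos (j e : ℕ) : 0 < nN j e := by unfold nN; positivity

lemma mem_Rf_bound {j s e : ℕ} (hs : s ≤ j) {v : ℤ} (h : v ∈ Rf j s e) :
    -(2 * M j e) ≤ v ∧ v ≤ 3 * M j e := by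
  have hM := M_pos j e
  rcases mem_Rf_cases' hs h with ⟨_, _, h1, h2⟩ | rfl | rfl | rfl <;> omega

lemma mem_Rx_bound' {j s e : ℕ} (hs : s ≤ j) {v : ℤ} (h : v ∈ Rx j s e) :
    -(3 * M j e) ≤ v ∧ v ≤ 3 * M j e := by
  have hM := M_pos j e
  have := mem_Rx_bound hs h
  omega

/-- casting characterization : two integers in a suitable window are equal mod nN
iff they differ by 0 or ±6M -/
lemma cast_eq_iff (j e : ℕ) {a b : ℤ} (ha : -(9 * M j e) ≤ a - b)
    (hb : a - b ≤ 9 * M j e) :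
    ((a : ZMod (nN j e)) = (b : ZMod (nN j e)))
      ↔ (a = b ∨ a - b = 6 * M j e ∨ a - b = -(6 * M j e)) := by
  have hM := M_pos j e
  rw [ZMod.intCast_eq_intCast_iff, Int.ModEq]
  constructor
  · intro h
    have hdvd : (nN j e : ℤ) ∣ a - b := Int.ModEq.dvd (Int.ModEq.symm h)
    rw [nN_eq] at hdvd
    obtain ⟨t, ht⟩ := hdvd
    have h1 : t ≤ 1 := by nlinarith
    have h2 : -1 ≤ t := by nlinarith
    have : t = -1 ∨ t = 0 ∨ t = 1 := by omega
    rcases this with rfl | rfl | rfl <;> omega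
  · intro h
    have hdvd : (nN j e : ℤ) ∣ a - b := by
      rw [nN_eq]
      rcases h with h | h | h
      · simp [h]
      · exact ⟨1, by omega⟩
      · exact ⟨-1, by omega⟩
    exact Int.ModEq.symm (Int.modEq_iff_dvd.mpr hdvd)

def Sdef (j s e : ℕ) : Set (ZMod (nN j e)) :=
  ↑((Fp j s e).image (fun z : ℤ => (z : ZMod (nN j e))))

lemma mem_D_iff {j s e : ℕ} {z : ZMod (nN j e)} :
    z ∈ Sdef j s e ∪ -Sdef j s e ↔ ∃ v ∈ Rx j s e, z = (v : ZMod (nN j e)) := by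
  simp only [Sdef, Set.mem_union, Set.mem_neg, Finset.mem_coe, Finset.mem_image]
  constructor
  · rintro (⟨f, hf, hfz⟩ | ⟨f, hf, hfz⟩)
    · exact ⟨f, by simp [Rx, mem_union, hf], hfz.symm⟩
    · refine ⟨-f, ?_, ?_⟩
      · simp only [Rx, mem_union, mem_image]
        exact Or.inr ⟨f, hf, rfl⟩
      · push_cast
        rw [hfz]
        ring
  · rintro ⟨v, hv, rfl⟩
    simp only [Rx, mem_union, mem_image] at hv
    rcases hv with hv | ⟨f, hf, rfl⟩
    · exact Or.inl ⟨v, hv, rfl⟩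
    · right
      refine ⟨f, hf, ?_⟩
      push_cast
      ring

lemma adj_iff {j s e : ℕ} (hs : s ≤ j) {x y : ℤ} (hx : x ∈ Rf j s e)
    (hy : y ∈ Rf j s e) :
    ((x : ZMod (nN j e)) - (y : ZMod (nN j e)) ∈ Sdef j s e ∪ -Sdef j s e)
      ↔ (x - y ∈ Rx j s e ∨ x - y - 6 * M j e ∈ Rx j s e
          ∨ x - y + 6 * M j e ∈ Rx j s e) := by
  have hM := M_pos j e
  obtain ⟨hbx1, hbx2⟩ := mem_Rf_bound hs hx
  obtain ⟨hby1, hby2⟩ := mem_Rf_bound hs hy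
  have hcast : (x : ZMod (nN j e)) - (y : ZMod (nN j e))
      = ((x - y : ℤ) : ZMod (nN j e)) := by push_cast; ring
  rw [hcast, mem_D_iff]
  constructor
  · rintro ⟨v, hv, hzv⟩
    obtain ⟨hbv1, hbv2⟩ := mem_Rx_bound' hs hv
    have := (cast_eq_iff j e (a := x - y) (b := v) (by omega) (by omega)).mp hzv
    rcases this with h | h | h
    · left; rwa [h]
    · right; left
      have h2 : x - y - 6 * M j e = v := by omega
      rwa [h2]
    · right; right
      have h2 : x - y + 6 * M j e = v := by omega
      rwa [h2]
  · rintro (h | h | h)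
    · exact ⟨_, h, rfl⟩
    · refine ⟨_, h, ?_⟩
      exact (cast_eq_iff j e (by omega) (by omega)).mpr (by omega)
    · refine ⟨_, h, ?_⟩
      exact (cast_eq_iff j e (by omega) (by omega)).mpr (by omega)

lemma pads_strictmono (j : ℕ) {a b : ℕ} (h : a < b) : W j * 4 ^ a < W j * 4 ^ b := by
  have := pow4_le h
  have := W_pos j
  have := pow4_pos a
  nlinarith

lemma FS_card (j s e : ℕ) (hs : s ≤ j) : (FS j s e).card = j + 1 + e := by
  have hwlb := w_lb j s hs
  have hLz : (Lz j s).card = j + 1 := by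
    rw [Lz, Finset.union_comm, ← Finset.insert_eq,
      Finset.card_insert_of_notMem (by simp only [mem_Icc]; omega), Int.card_Icc]
    omega
  have hPz : (Pz j e).card = e := by
    rw [Pz, Finset.card_image_of_injOn, Nat.card_Icc]
    · omega
    · intro a ha b hb hab
      simp only at hab
      by_contra hne
      rcases Nat.lt_or_ge a b with h | h
      · have := pads_strictmono j h; omega
      · have hlt : b < a := by omega
        have := pads_strictmono j hlt; omega
  rw [FS, Finset.card_union_of_disjoint, hLz, hPz]
  rw [Finset.disjoint_left]
  intro x hx hx'
  have h1 : x ≤ 2 * (j:ℤ) + 1 := by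
    rcases mem_Lz_iff.mp hx with ⟨_, h⟩ | rfl
    · omega
    · exact w_ub j s
  have h2 := mem_Pz_lb hx'
  have := W_pos j
  unfold W at h2
  push_cast at h2
  omega

lemma Rf_card (j s e : ℕ) (hs : s ≤ j) : (Rf j s e).card = 2 * (j + 1 + e) + 3 := by
  have hM := M_pos j e
  have hRS : (RS j s e).card = 2 * (j + 1 + e) := by
    rw [RS, Finset.card_union_of_disjoint, NFS,
      Finset.card_image_of_injective _ neg_injective, FS_card j s e hs]
    · ring
    · rw [Finset.disjoint_left]
      intro x hx hx'
      have := FS_pos hs hx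
      have := FS_pos hs (mem_NFS_iff.mp hx')
      omega
  have htr : ({2 * M j e, -(2 * M j e), 3 * M j e} : Finset ℤ).card = 3 := by
    rw [Finset.card_insert_of_notMem, Finset.card_insert_of_notMem,
      Finset.card_singleton]
    · simp only [mem_singleton]; omega
    · simp only [mem_insert, mem_singleton]
      push_neg
      constructor <;> omega
  rw [Rf, Finset.card_union_of_disjoint, hRS, htr]
  rw [Finset.disjoint_left]
  intro x hx hx'
  obtain ⟨h0, h1, h2⟩ := mem_RS_bounds hs hx
  simp only [mem_insert, mem_singleton] at hx'
  rcases hx' with rfl | rfl | rfl <;> omega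

lemma Rf_subset_Rx {j s e : ℕ} {v : ℤ} (h : v ∈ Rf j s e) : v ∈ Rx j s e := by
  rcases mem_Rf_cases h with h | rfl | rfl | rfl
  · exact RS_subset_Rx h
  · exact mem_Rx_iff.mpr (by tauto)
  · exact mem_Rx_iff.mpr (by tauto)
  · exact mem_Rx_iff.mpr (by tauto)

lemma mem_Rx_nonzero {j s e : ℕ} (hs : s ≤ j) {v : ℤ} (h : v ∈ Rx j s e) : v ≠ 0 := by
  have hM := M_pos j e
  rcases mem_Rx_cases hs h with ⟨h0, _, _⟩ | rfl | rfl | rfl | rfl <;> omega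

lemma neg_mem_Rx {j s e : ℕ} {v : ℤ} (h : v ∈ Rx j s e) : -v ∈ Rx j s e := by
  rcases mem_Rx_iff.mp h with h | h | h | h | h | h
  · exact mem_Rx_iff.mpr (Or.inr (Or.inl (by simpa)))
  · exact mem_Rx_iff.mpr (Or.inl h)
  · subst h; exact mem_Rx_iff.mpr (by tauto)
  · subst h; exact mem_Rx_iff.mpr (by tauto)
  · subst h; exact mem_Rx_iff.mpr (by simp only [neg_neg]; tauto)
  · subst h; exact mem_Rx_iff.mpr (by simp only [neg_neg]; tauto)

lemma cast_ne_zero {j s e : ℕ} (hs : s ≤ j) {v : ℤ} (h : v ∈ Rx j s e) :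
    (v : ZMod (nN j e)) ≠ 0 := by
  have hM := M_pos j e
  obtain ⟨h1, h2⟩ := mem_Rx_bound' hs h
  have h0 := mem_Rx_nonzero hs h
  intro hc
  have : ((v : ℤ) : ZMod (nN j e)) = ((0 : ℤ) : ZMod (nN j e)) := by
    simpa using hc
  have := (cast_eq_iff j e (a := v) (b := 0) (by omega) (by omega)).mp this
  omega

lemma mem_Rx_to_Rf {j s e : ℕ} {u : ℤ} (h : u ∈ Rx j s e) :
    ∃ x ∈ Rf j s e, (x : ZMod (nN j e)) = (u : ZMod (nN j e)) := by
  have hM := M_pos j e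
  rcases mem_Rx_iff.mp h with h | h | h | h | h | h
  · exact ⟨u, RS_subset_Rf (mem_RS_iff.mpr (Or.inl h)), rfl⟩
  · exact ⟨u, RS_subset_Rf (mem_RS_iff.mpr (Or.inr h)), rfl⟩
  · subst h; exact ⟨_, by simp [Rf, mem_union, mem_insert], rfl⟩
  · subst h; exact ⟨_, by simp [Rf, mem_union, mem_insert, mem_singleton], rfl⟩
  · subst h; exact ⟨_, by simp [Rf, mem_union, mem_insert, mem_singleton], rfl⟩
  · subst h
    refine ⟨3 * M j e, by simp [Rf, mem_union, mem_insert, mem_singleton], ?_⟩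
    exact (cast_eq_iff j e (by omega) (by omega)).mpr (by omega)

lemma cast_injOn_Rf {j s e : ℕ} (hs : s ≤ j) {x y : ℤ} (hx : x ∈ Rf j s e)
    (hy : y ∈ Rf j s e) (h : (x : ZMod (nN j e)) = (y : ZMod (nN j e))) : x = y := by
  have hM := M_pos j e
  obtain ⟨hx1, hx2⟩ := mem_Rf_bound hs hx
  obtain ⟨hy1, hy2⟩ := mem_Rf_bound hs hy
  have := (cast_eq_iff j e (a := x) (b := y) (by omega) (by omega)).mp h
  omega

lemma nbhd_eq (j s e : ℕ) (hs : s ≤ j) (v : ZMod (nN j e)) :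
    (Circulant (nN j e) (Sdef j s e)).neighborSet v
      = (fun x : ℤ => v - (x : ZMod (nN j e))) '' ↑(Rf j s e) := by
  ext y
  constructor
  · rintro ⟨hne, hd⟩
    obtain ⟨u, hu, heq⟩ := mem_D_iff.mp hd
    obtain ⟨x, hx, hxe⟩ := mem_Rx_to_Rf hu
    refine ⟨x, hx, ?_⟩
    show v - (x : ZMod (nN j e)) = y
    rw [hxe, ← heq]; ring
  · rintro ⟨x, hx, rfl⟩
    have hxRx := Rf_subset_Rx hx
    constructor
    · intro hc
      have hc' : v = v - (x : ZMod (nN j e)) := hc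
      apply cast_ne_zero hs hxRx
      have h0 : v - (v - (x : ZMod (nN j e))) = 0 := by rw [← hc']; ring
      calc (x : ZMod (nN j e)) = v - (v - (x : ZMod (nN j e))) := by ring
      _ = 0 := h0
    · apply mem_D_iff.mpr
      refine ⟨x, hxRx, by ring⟩

lemma nbhd_card (j s e : ℕ) (hs : s ≤ j) (v : ZMod (nN j e)) :
    Nat.card ((Circulant (nN j e) (Sdef j s e)).neighborSet v) = 2 * (j + 1 + e) + 3 := by
  rw [Nat.card_coe_set_eq, nbhd_eq j s e hs v, Set.ncard_image_of_injOn,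
    Set.ncard_coe_finset, Rf_card j s e hs]
  intro x hx y hy h
  simp only [Finset.mem_coe] at hx hy
  apply cast_injOn_Rf hs hx hy
  have h' : v - (x : ZMod (nN j e)) = v - (y : ZMod (nN j e)) := h
  have : (v - (x : ZMod (nN j e))) - (v - (y : ZMod (nN j e)))
      = (y : ZMod (nN j e)) - (x : ZMod (nN j e)) := by ring
  rw [h'] at this
  simp only [sub_self] at this
  have h2 : (y : ZMod (nN j e)) = (x : ZMod (nN j e)) := by
    have := sub_eq_zero.mp this.symm
    exact this
  exact h2.symm

lemma neg_mem_D {j s e : ℕ} {z : ZMod (nN j e)}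
    (h : z ∈ Sdef j s e ∪ -Sdef j s e) : -z ∈ Sdef j s e ∪ -Sdef j s e := by
  obtain ⟨u, hu, rfl⟩ := mem_D_iff.mp h
  apply mem_D_iff.mpr
  exact ⟨-u, neg_mem_Rx hu, by push_cast; ring⟩

lemma pair_set_eq (j s e : ℕ) (hs : s ≤ j) (v : ZMod (nN j e)) :
    {p : ZMod (nN j e) × ZMod (nN j e) |
        p.1 ∈ (Circulant (nN j e) (Sdef j s e)).neighborSet v
        ∧ p.2 ∈ (Circulant (nN j e) (Sdef j s e)).neighborSet v
        ∧ (Circulant (nN j e) (Sdef j s e)).Adj p.1 p.2}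
      = (fun q : ℤ × ℤ => (v - (q.1 : ZMod (nN j e)), v - (q.2 : ZMod (nN j e))))
          '' ↑(ZP j s e) := by
  ext ⟨a, b⟩
  simp only [Set.mem_setOf_eq, Set.mem_image, Finset.mem_coe, Prod.mk.injEq, Prod.exists]
  constructor
  · rintro ⟨ha, hb, hne, hd⟩
    rw [nbhd_eq j s e hs v] at ha hb
    obtain ⟨x, hx, rfl⟩ := ha
    obtain ⟨y, hy, rfl⟩ := hb
    simp only [Finset.mem_coe] at hx hy
    refine ⟨x, y, ?_, rfl, rfl⟩
    simp only [ZP, mem_filter, mem_product]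
    have hsub : (v - (y : ZMod (nN j e))) - (v - (x : ZMod (nN j e)))
        = (x : ZMod (nN j e)) - (y : ZMod (nN j e)) := by ring
    have hd2 : (x : ZMod (nN j e)) - (y : ZMod (nN j e)) ∈ Sdef j s e ∪ -Sdef j s e := by
      rw [← hsub]
      have : (v - (y : ZMod (nN j e))) - (v - (x : ZMod (nN j e)))
          = -((v - (x : ZMod (nN j e))) - (v - (y : ZMod (nN j e)))) := by ring
      rw [this]
      exact neg_mem_D hd
    refine ⟨⟨hx, hy⟩, ?_, (adj_iff hs hx hy).mp hd2⟩
    intro hc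
    subst hc
    exact hne rfl
  · rintro ⟨x, y, hq, rfl, rfl⟩
    simp only [ZP, mem_filter, mem_product] at hq
    obtain ⟨⟨hx, hy⟩, hne, hd⟩ := hq
    have hd2 := (adj_iff hs hx hy).mpr hd
    refine ⟨?_, ?_, ?_, ?_⟩
    · rw [nbhd_eq j s e hs v]; exact ⟨x, by simpa using hx, rfl⟩
    · rw [nbhd_eq j s e hs v]; exact ⟨y, by simpa using hy, rfl⟩
    · intro hc
      apply hne
      apply cast_injOn_Rf hs hx hy
      have := sub_eq_zero.mpr hc
      have h2 : v - (x : ZMod (nN j e)) - (v - (y : ZMod (nN j e)))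
          = (y : ZMod (nN j e)) - (x : ZMod (nN j e)) := by ring
      rw [h2] at this
      exact (sub_eq_zero.mp this).symm
    · have h3 : (v - (x : ZMod (nN j e))) - (v - (y : ZMod (nN j e)))
          = -((x : ZMod (nN j e)) - (y : ZMod (nN j e))) := by ring
      rw [h3]
      exact neg_mem_D hd2

lemma Fp_subset_Rx {j s e : ℕ} {f : ℤ} (hf : f ∈ Fp j s e) : f ∈ Rx j s e := by
  apply mem_Rx_iff.mpr
  rcases mem_union.mp hf with h | h
  · exact Or.inl h
  · simp only [mem_insert, mem_singleton] at h
    tauto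

lemma Sdef_nonzero (j s e : ℕ) (hs : s ≤ j) : ∀ z ∈ Sdef j s e, z ≠ 0 := by
  intro z hz
  simp only [Sdef, Finset.mem_coe, Finset.mem_image] at hz
  obtain ⟨f, hf, rfl⟩ := hz
  exact cast_ne_zero hs (Fp_subset_Rx hf)

lemma edge_count (j s e : ℕ) (hs : s ≤ j) (v : ZMod (nN j e)) :
    2 * nbhdEdgeCount (Circulant (nN j e) (Sdef j s e)) v = (ZP j s e).card := by
  haveI : NeZero (nN j e) := ⟨(nN_pos j e).ne'⟩
  haveI : Fintype ↥((Circulant (nN j e) (Sdef j s e)).neighborSet v) :=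
    Fintype.ofFinite _
  rw [nbhdEdgeCount, two_mul_card_edgeSet]
  have heq : Nat.card {p : ↥((Circulant (nN j e) (Sdef j s e)).neighborSet v)
        × ↥((Circulant (nN j e) (Sdef j s e)).neighborSet v) |
        (SimpleGraph.induce ((Circulant (nN j e) (Sdef j s e)).neighborSet v)
          (Circulant (nN j e) (Sdef j s e))).Adj p.1 p.2}
      = Nat.card {q : ZMod (nN j e) × ZMod (nN j e) |
          q.1 ∈ (Circulant (nN j e) (Sdef j s e)).neighborSet v
          ∧ q.2 ∈ (Circulant (nN j e) (Sdef j s e)).neighborSet v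
          ∧ (Circulant (nN j e) (Sdef j s e)).Adj q.1 q.2} :=
    Nat.card_congr (e2equiv ((Circulant (nN j e) (Sdef j s e)).neighborSet v)
      (Circulant (nN j e) (Sdef j s e)))
  rw [heq, Nat.card_coe_set_eq, pair_set_eq j s e hs v,
    Set.ncard_image_of_injOn, Set.ncard_coe_finset]
  rintro ⟨x, y⟩ hp ⟨x', y'⟩ hq h
  simp only [Finset.mem_coe, ZP, mem_filter, mem_product] at hp hq
  simp only [Prod.mk.injEq] at h
  obtain ⟨h1, h2⟩ := h
  have hx : x = x' := by
    apply cast_injOn_Rf hs hp.1.1 hq.1.1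
    have e1 : v - (x : ZMod (nN j e)) = v - (x' : ZMod (nN j e)) := h1
    have := sub_eq_zero.mpr e1
    have e2 : v - (x : ZMod (nN j e)) - (v - (x' : ZMod (nN j e)))
        = (x' : ZMod (nN j e)) - (x : ZMod (nN j e)) := by ring
    rw [e2] at this
    exact (sub_eq_zero.mp this).symm
  have hy : y = y' := by
    apply cast_injOn_Rf hs hp.1.2 hq.1.2
    have e1 : v - (y : ZMod (nN j e)) = v - (y' : ZMod (nN j e)) := h2
    have := sub_eq_zero.mpr e1
    have e2 : v - (y : ZMod (nN j e)) - (v - (y' : ZMod (nN j e)))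
        = (y' : ZMod (nN j e)) - (y : ZMod (nN j e)) := by ring
    rw [e2] at this
    exact (sub_eq_zero.mp this).symm
  simp [hx, hy]

lemma Af_eq (j s e : ℕ) (hs : s ≤ j) :
    2 * (Af j s e).card = j * (j - 1) + 2 * s :=
  AFS_card j s e hs

end CircAux

open CircAux in
/-- For integers `k ≥ 1`, `r ≥ 2k + 3` with `r` odd, `c ≡ 1 (mod 3)` with
`3(k-2)(k-1)/2 ≤ c ≤ 3k(k-1)/2`, there exists an `(r,c)`-circulant. -/
theorem exists_circulant_of_c_mod_three_eq_one_odd (k c r : ℕ) (hk : 1 ≤ k)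
    (hr : 2 * k + 3 ≤ r) (hrodd : r % 2 = 1) (hc : c % 3 = 1)
    (hlow : 3 * (k - 2) * (k - 1) / 2 ≤ c) (hhigh : c ≤ 3 * k * (k - 1) / 2) :
    ∃ (n : ℕ), 1 ≤ n ∧ ∃ S : Set (ZMod n), (∀ s ∈ S, s ≠ 0) ∧
      (∀ v : ZMod n, Nat.card ((Circulant n S).neighborSet v) = r) ∧
      (∀ v : ZMod n, nbhdEdgeCount (Circulant n S) v = c) := by
  rcases Nat.lt_or_ge k 2 with hk2 | hk2
  · exfalso
    have hk1 : k = 1 := by omega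
    subst hk1
    norm_num at hhigh
    omega
  obtain ⟨a, rfl⟩ : ∃ a, k = a + 2 := ⟨k - 2, by omega⟩
  have hl : 3 * a * (a + 1) / 2 ≤ c := by
    have h0 : a + 2 - 2 = a := by omega
    have h1 : a + 2 - 1 = a + 1 := by omega
    rwa [h0, h1] at hlow
  have hh : c ≤ 3 * (a + 2) * (a + 1) / 2 := by
    have h1 : a + 2 - 1 = a + 1 := by omega
    rwa [h1] at hhigh
  set Ta := a * (a + 1) / 2 with hTa_def
  have hTa : 2 * Ta = a * (a + 1) := by
    obtain ⟨t, ht⟩ := Nat.even_mul_succ_self a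
    omega
  have hr1 : 3 * a * (a + 1) = 3 * (a * (a + 1)) := by ring
  rw [hr1, ← hTa] at hl
  have hr2 : 3 * (a + 2) * (a + 1) = 3 * (a * (a + 1)) + 6 * (a + 1) := by ring
  rw [hr2, ← hTa] at hh
  -- now hl : 3 * (2 * Ta) / 2 ≤ c, hh : c ≤ (3 * (2 * Ta) + 6 * (a+1)) / 2
  set m := (c - 1) / 3 with hm_def
  have hm : c = 3 * m + 1 := by omega
  set s := m - Ta with hs_def
  have hs : s ≤ a + 1 := by omega
  have hms : m = Ta + s := by omega
  set e := (r - (2 * (a + 2) + 3)) / 2 with he_def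
  have hre : r = 2 * ((a + 1) + 1 + e) + 3 := by omega
  refine ⟨nN (a + 1) e, nN_pos (a + 1) e, Sdef (a + 1) s e,
    Sdef_nonzero (a + 1) s e hs, ?_, ?_⟩
  · intro v
    rw [nbhd_card (a + 1) s e hs v]
    omega
  · intro v
    have h1 := edge_count (a + 1) s e hs v
    rw [ZP_card (a + 1) s e (by omega) hs] at h1
    have h2 := Af_eq (a + 1) s e hs
    have h3 : (a + 1) * (a + 1 - 1) = a * (a + 1) := by
      have : a + 1 - 1 = a := by omega
      rw [this]; ring
    rw [h3, ← hTa] at h2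
    omega
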